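/- For every integer ℓ ≥ 0 and every real ρ with 0 < ρ < 1 there exists a real C > 0, depending only on ℓ and ρ, with the following property: for every Lebesgue-measurable set T ⊆ ℝ² with B(0,ρ) ⊆ T ⊆ B(0,1) and every real polynomial q in two variables of total degree at most ℓ+1 satisfying ∫_T q(x) dx = 0, one has ∫_T q(x)² dx ≤ C² ∫_T ‖∇q(x)‖² dx. (This is the normalized form of the estimate ‖(rot-grad)⁻¹‖ ≲ h_F for the isomorphism from zero-mean polynomials of degree ≤ ℓ+1 on a face F onto the rotated-gradient space, since the rotated gradient has the same pointwise norm as the gradient.) -/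

import Mathlib

set_option maxHeartbeats 1000000
set_option synthInstance.maxHeartbeats 400000

open MvPolynomial MeasureTheory

/-- The gradient of a polynomial in two variables, evaluated at a point of `ℝ²`. -/
noncomputable def polyGrad2 (q : MvPolynomial (Fin 2) ℝ) (x : EuclideanSpace ℝ (Fin 2)) :
    EuclideanSpace ℝ (Fin 2) :=
  (WithLp.equiv 2 (Fin 2 → ℝ)).symm fun i => eval (fun j => x j) (pderiv i q)

local notation "E2" => EuclideanSpace ℝ (Fin 2)

noncomputable def PF (q : MvPolynomial (Fin 2) ℝ) : E2 → ℝ := fun x => eval (fun j => x j) q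
noncomputable def GF (q : MvPolynomial (Fin 2) ℝ) : E2 → ℝ :=
  fun x => ∑ k : Fin 2, (PF (pderiv k q) x)^2

lemma contPF (q : MvPolynomial (Fin 2) ℝ) : Continuous (PF q) := by
  have h1 : Continuous fun x : E2 => (fun j => x j : Fin 2 → ℝ) :=
    continuous_pi fun j => (EuclideanSpace.proj j).continuous
  exact (MvPolynomial.continuous_eval q).comp h1

lemma contGF (q : MvPolynomial (Fin 2) ℝ) : Continuous (GF q) := by
  apply continuous_finset_sum
  intro k _
  exact (contPF _).pow 2

lemma GF_nonneg (q : MvPolynomial (Fin 2) ℝ) (x : E2) : 0 ≤ GF q x :=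
  Finset.sum_nonneg fun k _ => sq_nonneg _

lemma integOn {f : E2 → ℝ} (hf : Continuous f) {T : Set E2} (hT : T ⊆ Metric.ball 0 1) :
    IntegrableOn f T volume :=
  ((hf.continuousOn).integrableOn_compact (isCompact_closedBall (0:E2) 1)).mono_set
    (hT.trans Metric.ball_subset_closedBall)

lemma integOnBall {f : E2 → ℝ} (hf : Continuous f) (r : ℝ) :
    IntegrableOn f (Metric.ball (0:E2) r) volume :=
  ((hf.continuousOn).integrableOn_compact (isCompact_closedBall (0:E2) r)).mono_set
    Metric.ball_subset_closedBall

lemma quad_expand {n : ℕ} (u : Fin n → E2 → ℝ) (hu : ∀ i, Continuous (u i))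
    (c : Fin n → ℝ) (r : ℝ) :
    (∫ x in Metric.ball (0:E2) r, (∑ i, c i * u i x)^2) =
      ∑ i, ∑ j, c i * c j * ∫ x in Metric.ball (0:E2) r, u i x * u j x := by
  have hptwise : ∀ x : E2, (∑ i, c i * u i x)^2
      = ∑ i, ∑ j, c i * c j * (u i x * u j x) := by
    intro x
    rw [sq, Finset.sum_mul_sum]
    apply Finset.sum_congr rfl; intro i _
    apply Finset.sum_congr rfl; intro j _
    ring
  simp only [hptwise]
  rw [integral_finset_sum]
  · apply Finset.sum_congr rfl; intro i _
    rw [integral_finset_sum]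
    · apply Finset.sum_congr rfl; intro j _
      exact MeasureTheory.integral_const_mul _ _
    · intro j _
      exact (integOnBall (continuous_const.mul ((hu i).mul (hu j))) r)
  · intro i _
    apply integrable_finset_sum
    intro j _
    exact (integOnBall (continuous_const.mul ((hu i).mul (hu j))) r)

lemma norm_polyGrad (q : MvPolynomial (Fin 2) ℝ) (x : E2) :
    ‖polyGrad2 q x‖^2 = GF q x := by
  rw [polyGrad2, EuclideanSpace.norm_eq]
  rw [Real.sq_sqrt (Finset.sum_nonneg fun k _ => sq_nonneg _)]
  apply Finset.sum_congr rfl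
  intro k _
  rw [Real.norm_eq_abs, sq_abs]
  rfl

lemma coeff_pderiv' (i : Fin 2) (p : MvPolynomial (Fin 2) ℝ) (m : Fin 2 →₀ ℕ) :
    coeff m (pderiv i p) = ((m i : ℝ) + 1) * coeff (m + Finsupp.single i 1) p := by
  induction p using MvPolynomial.induction_on' with
  | monomial u a =>
    rw [pderiv_monomial, coeff_monomial, coeff_monomial]
    by_cases h : u = m + Finsupp.single i 1
    · subst h
      have h1 : m + Finsupp.single i 1 - Finsupp.single i 1 = m := by
        ext j; simp [Finsupp.single_apply]
      have h2 : ((m + Finsupp.single i 1 : Fin 2 →₀ ℕ)) i = m i + 1 := by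
        simp [Finsupp.single_apply]
      rw [if_pos h1, if_pos rfl, h2]
      push_cast; ring
    · rw [if_neg h]
      by_cases h2 : u - Finsupp.single i 1 = m
      · have hu : u i = 0 := by
          by_contra hu
          apply h
          have hle : Finsupp.single i 1 ≤ u := by
            rw [Finsupp.single_le_iff]; omega
          rw [← h2, tsub_add_cancel_of_le hle]
        rw [if_pos h2, hu]
        simp
      · rw [if_neg h2, mul_zero]
  | add p q hp hq =>
    simp [map_add, coeff_add, hp, hq, mul_add]

lemma eq_C_of_pderiv_zero (p : MvPolynomial (Fin 2) ℝ) (h : ∀ i, pderiv i p = 0) :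
    p = C (coeff 0 p) := by
  ext m
  rw [coeff_C]
  by_cases hm : 0 = m
  · subst hm; simp
  · rw [if_neg hm]
    have : ∃ i, m i ≠ 0 := by
      by_contra hc
      push_neg at hc
      exact hm (by ext j; simp [hc j])
    obtain ⟨i, hi⟩ := this
    have hle : Finsupp.single i 1 ≤ m := by rw [Finsupp.single_le_iff]; omega
    have key := coeff_pderiv' i p (m - Finsupp.single i 1)
    rw [h i, tsub_add_cancel_of_le hle, coeff_zero] at key
    have hne : (((m - Finsupp.single i 1 : Fin 2 →₀ ℕ)) i : ℝ) + 1 ≠ 0 := by positivity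
    exact (mul_eq_zero.mp key.symm).resolve_left hne

-- a univariate polynomial vanishing on an interval is zero
lemma poly1_zero (p : Polynomial ℝ) (ε : ℝ) (hε : 0 < ε)
    (h : ∀ y : ℝ, |y| < ε → p.eval y = 0) : p = 0 := by
  apply Polynomial.eq_zero_of_infinite_isRoot
  apply Set.Infinite.mono (s := Set.Ioo (-ε) ε)
  · intro y hy
    simp only [Set.mem_setOf_eq, Polynomial.IsRoot]
    exact h y (abs_lt.mpr ⟨hy.1, hy.2⟩)
  · exact Set.Ioo_infinite (by linarith)

lemma mv1_zero (r : MvPolynomial (Fin 1) ℝ) (ε : ℝ) (hε : 0 < ε)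
    (h : ∀ s : Fin 1 → ℝ, |s 0| < ε → eval s r = 0) : r = 0 := by
  have key : Polynomial.map (eval (finZeroElim : Fin 0 → ℝ)) (finSuccEquiv ℝ 0 r) = 0 := by
    apply poly1_zero _ ε hε
    intro y hy
    rw [← eval_eq_eval_mv_eval' finZeroElim y r]
    apply h
    simp [Fin.cons, hy]
  apply (finSuccEquiv ℝ 0).injective
  rw [map_zero]
  apply Polynomial.ext
  intro k
  rw [Polynomial.coeff_zero]
  have hk : (finSuccEquiv ℝ 0 r).coeff k = 0 ∨ eval (finZeroElim : Fin 0 → ℝ) ((finSuccEquiv ℝ 0 r).coeff k) = 0 := by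
    right
    have := congrArg (fun q => q.coeff k) key
    simpa [Polynomial.coeff_map] using this
  rcases hk with hk | hk
  · exact hk
  · obtain ⟨a, ha⟩ := C_surjective (Fin 0) ((finSuccEquiv ℝ 0 r).coeff k)
    rw [← ha] at hk ⊢
    rw [eval_C] at hk
    rw [hk, map_zero]

lemma mv2_zero (q : MvPolynomial (Fin 2) ℝ) (ε : ℝ) (hε : 0 < ε)
    (h : ∀ v : Fin 2 → ℝ, (∀ i, |v i| < ε) → eval v q = 0) : q = 0 := by
  have key : ∀ s : Fin 1 → ℝ, |s 0| < ε →
      Polynomial.map (eval s) (finSuccEquiv ℝ 1 q) = 0 := by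
    intro s hs
    apply poly1_zero _ ε hε
    intro y hy
    rw [← eval_eq_eval_mv_eval' s y q]
    apply h
    intro i
    match i with
    | 0 => simpa using hy
    | 1 => simpa using hs
  apply (finSuccEquiv ℝ 1).injective
  rw [map_zero]
  apply Polynomial.ext
  intro k
  rw [Polynomial.coeff_zero]
  apply mv1_zero _ ε hε
  intro s hs
  have := congrArg (fun p => p.coeff k) (key s hs)
  simpa [Polynomial.coeff_map] using this

-- polynomial vanishing on a ball is zero
lemma mv2_zero' (q : MvPolynomial (Fin 2) ℝ) (r : ℝ) (hr : 0 < r)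
    (h : ∀ x ∈ Metric.ball (0:E2) r, eval (fun j => x j) q = 0) : q = 0 := by
  have h2 : ∀ v : Fin 2 → ℝ, (∀ i, |v i| < r/2) → eval v q = 0 := by
    intro v hv
    set x : E2 := (WithLp.equiv 2 (Fin 2 → ℝ)).symm v with hx
    have hxj : ∀ j, x j = v j := fun j => rfl
    have hmem : x ∈ Metric.ball (0:E2) r := by
      rw [mem_ball_zero_iff]
      rw [EuclideanSpace.norm_eq]
      have : ∀ i : Fin 2, ‖x i‖^2 < (r/2)^2 := by
        intro i
        rw [hxj i, Real.norm_eq_abs]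
        have := hv i
        nlinarith [abs_nonneg (v i)]
      have hsum : (∑ i : Fin 2, ‖x i‖^2) < r^2 := by
        rw [Fin.sum_univ_two]
        nlinarith [this 0, this 1]
      rw [show r = Real.sqrt (r^2) from (Real.sqrt_sq hr.le).symm]
      exact Real.sqrt_lt_sqrt (by positivity) hsum
    have := h x hmem
    simpa [hxj] using this
  exact mv2_zero q (r/2) (by linarith) h2

-- nonneg continuous function on a ball with zero integral vanishes
lemma zero_on_ball {f : E2 → ℝ} (hf : Continuous f) (h0 : ∀ x, 0 ≤ f x) (r : ℝ)
    (hint : (∫ x in Metric.ball (0:E2) r, f x) = 0) :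
    ∀ x ∈ Metric.ball (0:E2) r, f x = 0 := by
  have hInt : IntegrableOn f (Metric.ball (0:E2) r) volume := by
    exact ((hf.continuousOn).integrableOn_compact (isCompact_closedBall (0:E2) r)).mono_set
      Metric.ball_subset_closedBall
  have hae : f =ᵐ[volume.restrict (Metric.ball (0:E2) r)] 0 := by
    rw [← MeasureTheory.integral_eq_zero_iff_of_nonneg (fun x => h0 x) hInt]
    exact hint
  have hae2 : ∀ᵐ x ∂volume.restrict (Metric.ball (0:E2) r), f x = 0 := by
    filter_upwards [hae] with x hx using hx
  rw [MeasureTheory.ae_restrict_iff' Metric.isOpen_ball.measurableSet] at hae2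
  by_contra hc
  push_neg at hc
  obtain ⟨x₀, hx₀mem, hx₀⟩ := hc
  set U := Metric.ball (0:E2) r ∩ {x | f x ≠ 0} with hU
  have hUopen : IsOpen U := Metric.isOpen_ball.inter (isOpen_compl_singleton.preimage hf)
  have hUne : U.Nonempty := ⟨x₀, hx₀mem, hx₀⟩
  have hpos : 0 < volume U := hUopen.measure_pos volume hUne
  have hzero : volume U = 0 := by
    apply measure_mono_null _ (MeasureTheory.ae_iff.mp hae2)
    rintro x ⟨hxb, hxf⟩
    simp only [Set.mem_setOf_eq, not_forall]
    exact ⟨hxb, hxf⟩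
  exact absurd hzero hpos.ne'

lemma quad_dom (n : ℕ) (f g : EuclideanSpace ℝ (Fin n) → ℝ)
    (hf : Continuous f) (hg : Continuous g)
    (hfh : ∀ (t : ℝ) c, f (t • c) = t^2 * f c) (hgh : ∀ (t : ℝ) c, g (t • c) = t^2 * g c)
    (hf0 : ∀ c, 0 ≤ f c) (hg0 : ∀ c, 0 ≤ g c) (hgpos : ∀ c, c ≠ 0 → 0 < g c) :
    ∃ C : ℝ, 0 < C ∧ ∀ c, f c ≤ C^2 * g c := by
  have hfzero : f 0 = 0 := by
    have := hfh 0 0; rw [smul_zero] at this; linarith [this]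
  have hgzero : g 0 = 0 := by
    have := hgh 0 0; rw [smul_zero] at this; linarith [this]
  rcases Nat.eq_zero_or_pos n with hn | hn
  · refine ⟨1, one_pos, fun c => ?_⟩
    subst hn
    have hc : c = 0 := Subsingleton.elim c 0
    rw [hc, hfzero, hgzero]; norm_num
  · have hsne : (Metric.sphere (0 : EuclideanSpace ℝ (Fin n)) 1).Nonempty := by
      refine ⟨EuclideanSpace.single ⟨0, hn⟩ 1, ?_⟩
      simp [EuclideanSpace.norm_single]
    have hcomp : IsCompact (Metric.sphere (0 : EuclideanSpace ℝ (Fin n)) 1) :=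
      isCompact_sphere _ _
    obtain ⟨um, humS, hum⟩ := hcomp.exists_isMinOn hsne hg.continuousOn
    obtain ⟨uM, huMS, huM⟩ := hcomp.exists_isMaxOn hsne hf.continuousOn
    set m := g um with hm
    set M := f uM with hM
    have hmpos : 0 < m := by
      apply hgpos
      intro h0
      rw [h0] at humS
      simp at humS
    have hM0 : 0 ≤ M := hf0 uM
    refine ⟨Real.sqrt (M/m + 1), Real.sqrt_pos.mpr (by positivity), fun c => ?_⟩
    have hC2 : (Real.sqrt (M/m + 1))^2 = M/m + 1 := Real.sq_sqrt (by positivity)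
    rw [hC2]
    by_cases hc : c = 0
    · rw [hc, hfzero, hgzero]; norm_num
    · set t := ‖c‖ with ht
      have htpos : 0 < t := norm_pos_iff.mpr hc
      set u := t⁻¹ • c with hu
      have huS : u ∈ Metric.sphere (0 : EuclideanSpace ℝ (Fin n)) 1 := by
        rw [mem_sphere_zero_iff_norm, hu, norm_smul, norm_inv, norm_norm]
        field_simp
      have hcu : c = t • u := by
        rw [hu, smul_smul, mul_inv_cancel₀ htpos.ne', one_smul]
      have h1 : f c = t^2 * f u := by rw [hcu, hfh]
      have h2 : g c = t^2 * g u := by rw [hcu, hgh]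
      have h3 : f u ≤ M := huM huS
      have h4 : m ≤ g u := hum huS
      rw [h1, h2]
      have : t^2 * f u ≤ (M/m) * (t^2 * g u) := by
        rw [div_mul_eq_mul_div, le_div_iff₀ hmpos]
        have A : t^2 * f u ≤ t^2 * M := mul_le_mul_of_nonneg_left h3 (sq_nonneg t)
        have A2 : t^2 * f u * m ≤ t^2 * M * m := mul_le_mul_of_nonneg_right A hmpos.le
        have B : t^2 * M * m ≤ t^2 * M * g u :=
          mul_le_mul_of_nonneg_left h4 (mul_nonneg (sq_nonneg t) hM0)
        calc t^2 * f u * m ≤ t^2 * M * m := A2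
          _ ≤ t^2 * M * g u := B
          _ = M * (t^2 * g u) := by ring
      calc t^2 * f u ≤ (M/m) * (t^2 * g u) := this
        _ ≤ (M/m + 1) * (t^2 * g u) := by
            apply mul_le_mul_of_nonneg_right (by linarith)
            have := hg0 u; positivity

lemma sum_swap3 {n m : ℕ} (f : Fin n → Fin n → Fin m → ℝ) :
    ∑ i, ∑ j, ∑ k, f i j k = ∑ k, ∑ i, ∑ j, f i j k := by
  have h1 : ∀ i : Fin n, ∑ j, ∑ k, f i j k = ∑ k, ∑ j, f i j k := fun i => Finset.sum_comm
  simp_rw [h1]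
  exact Finset.sum_comm

lemma PF_add (p q : MvPolynomial (Fin 2) ℝ) (x : E2) : PF (p + q) x = PF p x + PF q x :=
  map_add (eval fun j => x j) p q
lemma PF_smul (c : ℝ) (q : MvPolynomial (Fin 2) ℝ) (x : E2) :
    PF (c • q) x = c * PF q x := smul_eval _ q c
lemma PF_sum {n : ℕ} (u : Fin n → MvPolynomial (Fin 2) ℝ) (x : E2) :
    PF (∑ i, u i) x = ∑ i, PF (u i) x :=
  map_sum (eval fun j => x j) u Finset.univ

lemma key (ℓ : ℕ) (ρ : ℝ) (hρ0 : 0 < ρ) (hρ1 : ρ < 1) :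
    ∃ C : ℝ, 0 < C ∧ ∀ p : MvPolynomial (Fin 2) ℝ, p.totalDegree ≤ ℓ + 1 →
      (∫ x in Metric.ball (0:E2) ρ, PF p x) = 0 →
      (∫ x in Metric.ball (0:E2) 1, (PF p x)^2) ≤
        C^2 * ∫ x in Metric.ball (0:E2) ρ, GF p x := by
  classical
  -- the mean-value linear functional
  set L : MvPolynomial (Fin 2) ℝ →ₗ[ℝ] ℝ :=
    { toFun := fun q => ∫ x in Metric.ball (0:E2) ρ, PF q x
      map_add' := by
        intro p q
        rw [show PF (p + q) = fun x => PF p x + PF q x from funext fun x => PF_add p q x]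
        exact integral_add (integOnBall (contPF p) ρ) (integOnBall (contPF q) ρ)
      map_smul' := by
        intro c q
        simp only [RingHom.id_apply, smul_eq_mul]
        simp only [PF_smul]
        exact MeasureTheory.integral_const_mul c (PF q) } with hLdef
  have hLapp : ∀ q, L q = ∫ x in Metric.ball (0:E2) ρ, PF q x := fun q => rfl
  set W := restrictTotalDegree (Fin 2) ℝ (ℓ + 1) with hW
  set V := W ⊓ LinearMap.ker L with hV
  haveI : FiniteDimensional ℝ W := inferInstance
  haveI : FiniteDimensional ℝ V := Submodule.finiteDimensional_of_le inf_le_left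
  set n := Module.finrank ℝ V with hn
  set b : Module.Basis (Fin n) ℝ V := Module.finBasis ℝ V with hb
  set e : Fin n → MvPolynomial (Fin 2) ℝ := fun i => ((b i : V) : MvPolynomial (Fin 2) ℝ)
    with he
  -- the two quadratic forms
  set φ : EuclideanSpace ℝ (Fin n) → ℝ := fun c => ∑ i, ∑ j, c i * c j *
    ∫ x in Metric.ball (0:E2) 1, PF (e i) x * PF (e j) x with hφdef
  set ψ : EuclideanSpace ℝ (Fin n) → ℝ := fun c => ∑ i, ∑ j, c i * c j *
    (∑ k : Fin 2, ∫ x in Metric.ball (0:E2) ρ, PF (pderiv k (e i)) x * PF (pderiv k (e j)) x)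
    with hψdef
  -- representation of evaluations
  have hrep : ∀ (c : Fin n → ℝ) (x : E2), PF (∑ i, c i • e i) x = ∑ i, c i * PF (e i) x := by
    intro c x
    rw [PF_sum]
    exact Finset.sum_congr rfl fun i _ => PF_smul (c i) (e i) x
  have hrepD : ∀ (c : Fin n → ℝ) (k : Fin 2) (x : E2),
      PF (pderiv k (∑ i, c i • e i)) x = ∑ i, c i * PF (pderiv k (e i)) x := by
    intro c k x
    rw [map_sum (pderiv k) (fun i => c i • e i) Finset.univ]
    rw [PF_sum (fun i => pderiv k (c i • e i)) x]
    apply Finset.sum_congr rfl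
    intro i _
    rw [(pderiv k).map_smul (c i) (e i)]
    exact PF_smul (c i) (pderiv k (e i)) x
  have hφ : ∀ c : EuclideanSpace ℝ (Fin n),
      φ c = ∫ x in Metric.ball (0:E2) 1, (PF (∑ i, (c : Fin n → ℝ) i • e i) x)^2 := by
    intro c
    rw [hφdef]
    simp only []
    rw [← quad_expand (fun i => PF (e i)) (fun i => contPF _) (fun i => c i) 1]
    apply setIntegral_congr_fun Metric.isOpen_ball.measurableSet
    intro x _
    show (∑ i, (c : Fin n → ℝ) i * PF (e i) x)^2 = PF (∑ i, (c : Fin n → ℝ) i • e i) x ^ 2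
    rw [hrep (fun i => c i) x]
  have hψ : ∀ c : EuclideanSpace ℝ (Fin n),
      ψ c = ∫ x in Metric.ball (0:E2) ρ, GF (∑ i, (c : Fin n → ℝ) i • e i) x := by
    intro c
    have hswap : ψ c = ∑ k : Fin 2, ∑ i, ∑ j, (c : Fin n → ℝ) i * c j *
        ∫ x in Metric.ball (0:E2) ρ, PF (pderiv k (e i)) x * PF (pderiv k (e j)) x := by
      rw [hψdef]
      simp only [Finset.mul_sum]
      exact sum_swap3 _
    rw [hswap]
    have hGF : ∀ x : E2, GF (∑ i, (c : Fin n → ℝ) i • e i) x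
        = ∑ k : Fin 2, (∑ i, (c : Fin n → ℝ) i * PF (pderiv k (e i)) x)^2 := by
      intro x
      apply Finset.sum_congr rfl
      intro k _
      rw [hrepD (fun i => c i) k x]
    have : (∫ x in Metric.ball (0:E2) ρ, GF (∑ i, (c : Fin n → ℝ) i • e i) x)
        = ∑ k : Fin 2, ∫ x in Metric.ball (0:E2) ρ,
            (∑ i, (c : Fin n → ℝ) i * PF (pderiv k (e i)) x)^2 := by
      rw [show (fun x => GF (∑ i, (c : Fin n → ℝ) i • e i) x)
          = fun x => ∑ k : Fin 2, (∑ i, (c : Fin n → ℝ) i * PF (pderiv k (e i)) x)^2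
          from funext hGF]
      apply integral_finset_sum
      intro k _
      apply integOnBall
      apply Continuous.pow
      apply continuous_finset_sum
      intro i _
      exact continuous_const.mul (contPF _)
    rw [this]
    apply Finset.sum_congr rfl
    intro k _
    exact (quad_expand (fun i => PF (pderiv k (e i))) (fun i => contPF _) (fun i => c i) ρ).symm
  -- continuity of the quadratic forms
  have hproj : ∀ i : Fin n, Continuous fun c : EuclideanSpace ℝ (Fin n) => (c : Fin n → ℝ) i :=
    fun i => (EuclideanSpace.proj i).continuous
  have hφcont : Continuous φ := by
    rw [hφdef]
    apply continuous_finset_sum; intro i _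
    apply continuous_finset_sum; intro j _
    exact ((hproj i).mul (hproj j)).mul continuous_const
  have hψcont : Continuous ψ := by
    rw [hψdef]
    apply continuous_finset_sum; intro i _
    apply continuous_finset_sum; intro j _
    exact ((hproj i).mul (hproj j)).mul continuous_const
  -- homogeneity
  have hsmul_apply : ∀ (t : ℝ) (c : EuclideanSpace ℝ (Fin n)) (i : Fin n),
      ((t • c : EuclideanSpace ℝ (Fin n)) : Fin n → ℝ) i = t * (c : Fin n → ℝ) i :=
    fun t c i => rfl
  have hφh : ∀ (t : ℝ) (c : EuclideanSpace ℝ (Fin n)), φ (t • c) = t^2 * φ c := by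
    intro t c
    rw [hφdef]
    simp only [hsmul_apply]
    rw [Finset.mul_sum]
    apply Finset.sum_congr rfl; intro i _
    rw [Finset.mul_sum]
    apply Finset.sum_congr rfl; intro j _
    ring
  have hψh : ∀ (t : ℝ) (c : EuclideanSpace ℝ (Fin n)), ψ (t • c) = t^2 * ψ c := by
    intro t c
    rw [hψdef]
    simp only [hsmul_apply]
    rw [Finset.mul_sum]
    apply Finset.sum_congr rfl; intro i _
    rw [Finset.mul_sum]
    apply Finset.sum_congr rfl; intro j _
    ring
  -- nonnegativity
  have hφ0 : ∀ c, 0 ≤ φ c := by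
    intro c
    rw [hφ c]
    apply setIntegral_nonneg Metric.isOpen_ball.measurableSet
    intro x _
    exact sq_nonneg _
  have hψ0 : ∀ c, 0 ≤ ψ c := by
    intro c
    rw [hψ c]
    apply setIntegral_nonneg Metric.isOpen_ball.measurableSet
    intro x _
    exact GF_nonneg _ x
  -- volume facts
  have hvρpos : 0 < (volume (Metric.ball (0:E2) ρ)).toReal := by
    apply ENNReal.toReal_pos
    · exact (Metric.measure_ball_pos volume 0 hρ0).ne'
    · exact (measure_ball_lt_top).ne
  -- L of a constant
  have hLC : ∀ a : ℝ, L (MvPolynomial.C a) = (volume (Metric.ball (0:E2) ρ)).toReal * a := by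
    intro a
    rw [hLapp]
    have : PF (MvPolynomial.C a : MvPolynomial (Fin 2) ℝ) = fun _ => a := by
      funext x; simp [PF]
    rw [this]
    rw [setIntegral_const]
    rw [smul_eq_mul, measureReal_def]
  -- positivity of ψ
  have hψpos : ∀ c : EuclideanSpace ℝ (Fin n), c ≠ 0 → 0 < ψ c := by
    intro c hc
    set pv : V := ∑ i, (c : Fin n → ℝ) i • b i with hpv
    have hco : (∑ i, (c : Fin n → ℝ) i • e i) = (pv : MvPolynomial (Fin 2) ℝ) := by
      rw [hpv]
      simp only [he]
      rw [Submodule.coe_sum]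
      apply Finset.sum_congr rfl
      intro i _
      rfl
    have hpvne : pv ≠ 0 := by
      intro h0
      apply hc
      have heq : b.equivFun.symm (fun i => (c : Fin n → ℝ) i) = pv := by
        rw [Module.Basis.equivFun_symm_apply]
      have : b.equivFun.symm (fun i => (c : Fin n → ℝ) i) = b.equivFun.symm 0 := by
        rw [heq, h0, map_zero]
      have hc0 : (fun i => (c : Fin n → ℝ) i) = 0 := b.equivFun.symm.injective this
      ext i
      exact congrFun hc0 i
    rcases lt_or_eq_of_le (hψ0 c) with h | h
    · exact h
    · exfalso
      -- ψ c = 0, derive pv = 0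
      have hint0 : (∫ x in Metric.ball (0:E2) ρ, GF (pv : MvPolynomial (Fin 2) ℝ) x) = 0 := by
        rw [← hco, ← hψ c, ← h]
      have hGF0 := zero_on_ball (contGF _) (GF_nonneg _) ρ hint0
      have hder0 : ∀ k : Fin 2, pderiv k (pv : MvPolynomial (Fin 2) ℝ) = 0 := by
        intro k
        apply mv2_zero' _ ρ hρ0
        intro x hx
        have h1 := hGF0 x hx
        have h2 : ∀ k' ∈ (Finset.univ : Finset (Fin 2)),
            0 ≤ (PF (pderiv k' (pv : MvPolynomial (Fin 2) ℝ)) x)^2 := fun _ _ => sq_nonneg _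
        have h3 := (Finset.sum_eq_zero_iff_of_nonneg h2).mp h1 k (Finset.mem_univ k)
        have := pow_eq_zero_iff (n := 2) (by norm_num) |>.mp h3
        exact this
      have hpvC := eq_C_of_pderiv_zero _ hder0
      have hLpv : L (pv : MvPolynomial (Fin 2) ℝ) = 0 := by
        have hmem : (pv : MvPolynomial (Fin 2) ℝ) ∈ W ⊓ LinearMap.ker L := pv.2
        exact LinearMap.mem_ker.mp (Submodule.mem_inf.mp hmem).2
      rw [hpvC, hLC] at hLpv
      have ha0 : coeff 0 (pv : MvPolynomial (Fin 2) ℝ) = 0 := by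
        rcases mul_eq_zero.mp hLpv with h' | h'
        · exact absurd h' hvρpos.ne'
        · exact h'
      apply hpvne
      have : (pv : MvPolynomial (Fin 2) ℝ) = 0 := by
        rw [hpvC, ha0, map_zero]
      exact Subtype.ext this
  -- apply the compactness lemma
  obtain ⟨C, hCpos, hCle⟩ := quad_dom n φ ψ hφcont hψcont hφh hψh hφ0 hψ0 hψpos
  refine ⟨C, hCpos, fun p hdeg hL0 => ?_⟩
  have hpV : p ∈ V := by
    show p ∈ W ⊓ LinearMap.ker L
    refine Submodule.mem_inf.mpr ⟨?_, ?_⟩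
    · show p ∈ restrictTotalDegree (Fin 2) ℝ (ℓ + 1)
      exact (mem_restrictTotalDegree _ _ _).mpr hdeg
    · exact LinearMap.mem_ker.mpr hL0
  set v : V := ⟨p, hpV⟩ with hv
  set c : EuclideanSpace ℝ (Fin n) := (WithLp.equiv 2 (Fin n → ℝ)).symm (fun i => b.repr v i)
    with hcdef
  have hci : ∀ i, (c : Fin n → ℝ) i = b.repr v i := fun i => rfl
  have hsum : ∑ i, (c : Fin n → ℝ) i • e i = p := by
    have h1 : ∑ i, (c : Fin n → ℝ) i • b i = v := by
      have := b.sum_repr v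
      rw [← this]
      apply Finset.sum_congr rfl
      intro i _
      rw [hci]
    calc ∑ i, (c : Fin n → ℝ) i • e i
        = ((∑ i, (c : Fin n → ℝ) i • b i : V) : MvPolynomial (Fin 2) ℝ) := by
          rw [Submodule.coe_sum]
          apply Finset.sum_congr rfl
          intro i _
          rfl
      _ = p := by rw [h1]
  have := hCle c
  rw [hφ c, hψ c, hsum] at this
  exact this


/-- Poincaré–Wirtinger inequality for polynomials, uniform over sets sandwiched
between Euclidean balls: for every `ℓ ≥ 0` and `ρ ∈ (0,1)` there is `C > 0` depending only on `ℓ`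
and `ρ` such that for every measurable `T ⊆ ℝ²` with `B(0,ρ) ⊆ T ⊆ B(0,1)` and every polynomial
`q` of total degree `≤ ℓ+1` with `∫_T q = 0`, one has `∫_T q² ≤ C² ∫_T ‖∇q‖²`.
(Normalized form of the estimate `‖(rot-grad)⁻¹‖ ≲ h_F`.) -/
theorem rotgrad_inverse_bound (ℓ : ℕ) (ρ : ℝ) (hρ0 : 0 < ρ) (hρ1 : ρ < 1) :
    ∃ C : ℝ, 0 < C ∧
      ∀ T : Set (EuclideanSpace ℝ (Fin 2)), MeasurableSet T →
        Metric.ball 0 ρ ⊆ T → T ⊆ Metric.ball 0 1 →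
        ∀ q : MvPolynomial (Fin 2) ℝ, q.totalDegree ≤ ℓ + 1 →
          (∫ x in T, eval (fun j => x j) q) = 0 →
          (∫ x in T, (eval (fun j => x j) q) ^ 2) ≤
            C ^ 2 * ∫ x in T, ‖polyGrad2 q x‖ ^ 2 := by
  obtain ⟨C, hC, hkey⟩ := key ℓ ρ hρ0 hρ1
  refine ⟨C, hC, ?_⟩
  intro T hTmeas hT1 hT2 q hdeg hint
  have hint' : (∫ x in T, PF q x) = 0 := hint
  set vρ := (volume (Metric.ball (0:E2) ρ)).toReal with hvρ
  have hvρpos : 0 < vρ := by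
    apply ENNReal.toReal_pos
    · exact (Metric.measure_ball_pos volume 0 hρ0).ne'
    · exact (measure_ball_lt_top).ne
  set a : ℝ := (∫ x in Metric.ball (0:E2) ρ, PF q x) / vρ with ha
  set p : MvPolynomial (Fin 2) ℝ := q + MvPolynomial.C (-a) with hp
  have hPFp : ∀ x : E2, PF p x = PF q x - a := by
    intro x
    rw [hp]
    show eval (fun j => x j) (q + MvPolynomial.C (-a)) = PF q x - a
    rw [map_add, eval_C]
    rfl
  have hGFp : ∀ x : E2, GF p x = GF q x := by
    intro x
    rw [GF, GF]
    apply Finset.sum_congr rfl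
    intro k _
    rw [hp, map_add, pderiv_C, add_zero]
  have hdegp : p.totalDegree ≤ ℓ + 1 := by
    rw [hp]
    refine (totalDegree_add q (MvPolynomial.C (-a))).trans ?_
    rw [totalDegree_C]
    exact max_le hdeg (Nat.zero_le _)
  have hmean : (∫ x in Metric.ball (0:E2) ρ, PF p x) = 0 := by
    rw [show (fun x : E2 => PF p x) = fun x => PF q x - a from funext hPFp]
    rw [integral_sub (integOnBall (contPF q) ρ) (integrableOn_const measure_ball_lt_top.ne)]
    rw [setIntegral_const, smul_eq_mul, ha, measureReal_def, ← hvρ]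
    field_simp
    ring
  have hkeyp := hkey p hdegp hmean
  -- step 1: ∫_T (PF q)² ≤ ∫_T (PF p)²
  have hIq2 : IntegrableOn (fun x => (PF q x)^2) T volume := integOn ((contPF q).pow 2) hT2
  have hIq : IntegrableOn (PF q) T volume := integOn (contPF q) hT2
  have hvolT : volume T < ⊤ := lt_of_le_of_lt (measure_mono hT2) measure_ball_lt_top
  have hstep1 : (∫ x in T, (PF q x)^2) ≤ ∫ x in T, (PF p x)^2 := by
    have hexp : (fun x : E2 => (PF p x)^2)
        = fun x => (PF q x)^2 + ((-(2*a)) * PF q x + a^2) := by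
      funext x
      rw [hPFp x]
      ring
    rw [hexp]
    have hI2 : IntegrableOn (fun x : E2 => (-(2*a)) * PF q x + a^2) T volume := by
      apply Integrable.add
      · exact hIq.const_mul _
      · exact integrableOn_const hvolT.ne
    rw [integral_add hIq2 hI2]
    have : (∫ x in T, ((-(2*a)) * PF q x + a^2)) = (volume T).toReal * a^2 := by
      rw [integral_add (hIq.const_mul _) (integrableOn_const hvolT.ne)]
      rw [MeasureTheory.integral_const_mul, hint', mul_zero, zero_add, setIntegral_const,
        smul_eq_mul, measureReal_def]
    rw [this]
    have : 0 ≤ (volume T).toReal * a^2 := by positivity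
    linarith
  -- step 2: ∫_T (PF p)² ≤ ∫_{B1} (PF p)²
  have hstep2 : (∫ x in T, (PF p x)^2) ≤ ∫ x in Metric.ball (0:E2) 1, (PF p x)^2 := by
    apply setIntegral_mono_set (integOnBall ((contPF p).pow 2) 1)
    · exact Filter.Eventually.of_forall fun x => sq_nonneg _
    · exact HasSubset.Subset.eventuallyLE hT2
  -- step 3: ∫_{Bρ} GF p = ∫_{Bρ} GF q ≤ ∫_T GF q
  have hstep3 : (∫ x in Metric.ball (0:E2) ρ, GF p x) ≤ ∫ x in T, GF q x := by
    have heq : (∫ x in Metric.ball (0:E2) ρ, GF p x)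
        = ∫ x in Metric.ball (0:E2) ρ, GF q x := by
      apply setIntegral_congr_fun Metric.isOpen_ball.measurableSet
      intro x _
      exact hGFp x
    rw [heq]
    apply setIntegral_mono_set (integOn (contGF q) hT2)
    · exact Filter.Eventually.of_forall fun x => GF_nonneg q x
    · exact HasSubset.Subset.eventuallyLE hT1
  -- conclude
  have hgrad : (∫ x in T, ‖polyGrad2 q x‖ ^ 2) = ∫ x in T, GF q x := by
    apply setIntegral_congr_fun hTmeas
    intro x _
    exact norm_polyGrad q x
  show (∫ x in T, (PF q x)^2) ≤ C ^ 2 * ∫ x in T, ‖polyGrad2 q x‖ ^ 2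
  rw [hgrad]
  calc (∫ x in T, (PF q x)^2) ≤ ∫ x in T, (PF p x)^2 := hstep1
    _ ≤ ∫ x in Metric.ball (0:E2) 1, (PF p x)^2 := hstep2
    _ ≤ C^2 * ∫ x in Metric.ball (0:E2) ρ, GF p x := hkeyp
    _ ≤ C^2 * ∫ x in T, GF q x := mul_le_mul_of_nonneg_left hstep3 (sq_nonneg C)
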